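/- arXiv:1904.07942 — 11 statements merged into one kernel-verified Lean document; each statement's English description precedes it below -/
import Mathlib

section
/- For any 3×3 doubly stochastic matrix M, there exists a 3×3 doubly stochastic matrix M' such that M(I + Π) = (I + Π)M', where Π is the cyclic permutation matrix on 3 elements. -/
open Matrix

/-- A square real matrix is doubly stochastic if all entries are nonnegative and
every row and column sums to 1. -/
def IsDoublyStochastic {n : ℕ} (M : Matrix (Fin n) (Fin n) ℝ) : Prop :=
  (∀ i j, 0 ≤ M i j) ∧ (∀ i, ∑ j, M i j = 1) ∧ (∀ j, ∑ i, M i j = 1)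

/-- The cyclic permutation matrix with entries `Π i j = δ_{i, j+1 mod n}`. -/
def cyc (n : ℕ) : Matrix (Fin n) (Fin n) ℝ := fun i j => if (i : ℕ) = ((j : ℕ) + 1) % n then 1 else 0

/-- For any 3×3 doubly stochastic matrix `M` there exists a 3×3 doubly stochastic
matrix `M'` with `M (I + Π) = (I + Π) M'`. -/
theorem stmt0 (M : Matrix (Fin 3) (Fin 3) ℝ) (hM : IsDoublyStochastic M) :
    ∃ M' : Matrix (Fin 3) (Fin 3) ℝ, IsDoublyStochastic M' ∧
      M * (1 + cyc 3) = (1 + cyc 3) * M' := by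
  obtain ⟨hpos, hrow, hcol⟩ := hM
  have h0 := hrow 0; have h1 := hrow 1; have h2 := hrow 2
  have c0 := hcol 0; have c1 := hcol 1; have c2 := hcol 2
  simp [Fin.sum_univ_three] at h0 h1 h2 c0 c1 c2
  have e2 : (-1 : Fin 3) = 2 := by decide
  refine ⟨fun i j => M (i - 1) (j - 1), ⟨fun i j => hpos _ _, ?_, ?_⟩, ?_⟩
  · intro i
    fin_cases i <;> simp [Fin.sum_univ_three, e2] <;> linarith
  · intro j
    fin_cases j <;> simp [Fin.sum_univ_three, e2] <;> linarith
  · ext i j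
    erw [Matrix.mul_apply, Matrix.mul_apply]
    fin_cases i <;> fin_cases j <;>
      simp [Matrix.mul_apply, Fin.sum_univ_three, cyc, Matrix.one_apply, Matrix.add_apply, e2] <;>
      linarith
end

section
/- There exists a 4×4 doubly stochastic matrix M (in fact a permutation matrix) such that no 4×4 doubly stochastic matrix M' satisfies M(I + Π) = (I + Π)M', where Π is the cyclic permutation on 4 elements. -/
open Matrix

def mySigma : Equiv.Perm (Fin 4) :=
  ⟨![0, 2, 3, 1], ![0, 3, 1, 2], by decide, by decide⟩

/-- There is a 4×4 doubly stochastic matrix `M` (in fact a permutation matrix)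
such that no doubly stochastic `M'` satisfies `M (I + Π) = (I + Π) M'`. -/
theorem stmt1 :
    ∃ M : Matrix (Fin 4) (Fin 4) ℝ,
      IsDoublyStochastic M ∧
      (∃ σ : Equiv.Perm (Fin 4), ∀ i j, M i j = if σ j = i then 1 else 0) ∧
      ¬ ∃ M' : Matrix (Fin 4) (Fin 4) ℝ, IsDoublyStochastic M' ∧
          M * (1 + cyc 4) = (1 + cyc 4) * M' := by
  refine ⟨fun i j => if mySigma j = i then 1 else 0, ⟨?_, ?_, ?_⟩,
    ⟨mySigma, fun i j => rfl⟩, ?_⟩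
  · intro i j; dsimp only; split <;> norm_num
  · intro i; dsimp only; fin_cases i <;> rw [Fin.sum_univ_four] <;> simp [mySigma]
  · intro j; dsimp only; fin_cases j <;> rw [Fin.sum_univ_four] <;> norm_num [mySigma, Fin.ext_iff, show ((3:Fin 4):ℕ) = 3 from rfl]
  · rintro ⟨M', ⟨hpos, hrow, hcol⟩, heq⟩
    have h10 := congrFun (congrFun heq 1) 0
    have h20 := congrFun (congrFun heq 2) 0
    have h30 := congrFun (congrFun heq 3) 0
    rw [Matrix.mul_apply (M := fun i j => if mySigma j = i then (1:ℝ) else 0)] at h10 h20 h30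
    simp [Matrix.mul_apply, Matrix.add_apply, Matrix.one_apply, Fin.sum_univ_four,
      cyc, mySigma] at h10 h20 h30
    norm_num [show ((3:Fin 4):ℕ) = 3 from rfl] at h10 h20 h30
    have p00 := hpos 0 0
    have p10 := hpos 1 0
    have p30 := hpos 3 0
    linarith
end

section
/- There exists a 4×4 doubly stochastic matrix M and a nonnegative vector v ∈ ℝ^4 such that no 4×4 doubly stochastic matrix M' (possibly depending on v) satisfies M(I + Π)v = (I + Π)M' v, where Π is the cyclic permutation matrix on 4 elements. -/
open Matrix

/-- There exist a 4×4 doubly stochastic matrix `M` and a nonnegative vector `v`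
such that no doubly stochastic `M'` satisfies `M (I + Π) v = (I + Π) M' v`. -/
theorem stmt2 :
    ∃ (M : Matrix (Fin 4) (Fin 4) ℝ) (v : Fin 4 → ℝ),
      IsDoublyStochastic M ∧ (∀ i, 0 ≤ v i) ∧
      ¬ ∃ M' : Matrix (Fin 4) (Fin 4) ℝ, IsDoublyStochastic M' ∧
          (M * (1 + cyc 4)).mulVec v = ((1 + cyc 4) * M').mulVec v := by
  refine ⟨!![1,0,0,0;0,0,0,1;0,1,0,0;0,0,1,0], ![1,0,0,0], ⟨?_, ?_, ?_⟩, ?_, ?_⟩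
  · intro i j; fin_cases i <;> fin_cases j <;> norm_num
  · intro i; fin_cases i <;> simp [Fin.sum_univ_four]
  · intro j; fin_cases j <;> simp [Fin.sum_univ_four]
  · intro i; fin_cases i <;> norm_num
  · rintro ⟨M', ⟨hpos, hrow, hcol⟩, heq⟩
    have h0 := congrFun heq 0
    have h1 := congrFun heq 1
    have h2 := congrFun heq 2
    have h3 := congrFun heq 3
    simp [mulVec, Matrix.mul_apply, cyc, Fin.sum_univ_four, Matrix.one_apply,
      dotProduct] at h0 h1 h2 h3
    norm_num [show ((3:Fin 4):ℕ) = 3 from rfl] at h0 h1 h2 h3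
    have p01 := hpos 0 0
    have p10 := hpos 1 0
    have p20 := hpos 2 0
    have p30 := hpos 3 0
    nlinarith [h0, h1, h2, h3]
end

section
/- For a d-dimensional Hamiltonian with energies E_0 ≤ E_1 ≤ ... ≤ E_{d-1} and thermal probabilities p_i(β) = e^{-β E_i}/Z(β) with Z(β) = Σ_i e^{-β E_i}, the function g(β) = Σ_i p_i(β)^2 is nondecreasing in β; equivalently, for β' ≤ β one has Σ_i p_i(β')^2 ≤ Σ_i p_i(β)^2. -/
open Real

lemma schur_aux (a b c x y z : ℝ) (hc : 0 ≤ c) (hcb : c ≤ b) (hba : b ≤ a)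
    (hz : 0 ≤ z) (hzy : z ≤ y) (hyx : y ≤ x) :
    0 ≤ a * (x^2 - y*z) + b * (y^2 - z*x) + c * (z^2 - x*y) := by
  have h4 : 0 ≤ (x - y) * (a * (x - z) - b * (y - z)) := by
    apply mul_nonneg (by linarith)
    have : b * (y - z) ≤ a * (x - z) :=
      mul_le_mul hba (by linarith) (by linarith) (by linarith)
    linarith
  nlinarith [mul_nonneg (mul_nonneg (sub_nonneg.2 hba) (sub_nonneg.2 hyx)) hz,
    mul_nonneg (mul_nonneg (sub_nonneg.2 (hcb.trans hba)) (by linarith : (0:ℝ) ≤ x - z)) (by linarith : (0:ℝ) ≤ y),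
    mul_nonneg (mul_nonneg (sub_nonneg.2 hcb) (sub_nonneg.2 hzy)) (by linarith : (0:ℝ) ≤ x),
    mul_nonneg (mul_nonneg hc (by linarith : (0:ℝ) ≤ x - z)) (sub_nonneg.2 hzy)]

/-- Symmetric version: comonotone nonneg triples. -/
lemma schur_sym (a b c x y z : ℝ) (ha : 0 ≤ a) (hb : 0 ≤ b) (hc : 0 ≤ c)
    (hx : 0 ≤ x) (hy : 0 ≤ y) (hz : 0 ≤ z)
    (hab : (b ≤ a ∧ y ≤ x) ∨ (a ≤ b ∧ x ≤ y))
    (hac : (c ≤ a ∧ z ≤ x) ∨ (a ≤ c ∧ x ≤ z))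
    (hbc : (c ≤ b ∧ z ≤ y) ∨ (b ≤ c ∧ y ≤ z)) :
    0 ≤ a * (x^2 - y*z) + b * (y^2 - z*x) + c * (z^2 - x*y) := by
  rcases hab with ⟨h1, h1'⟩ | ⟨h1, h1'⟩ <;>
    rcases hac with ⟨h2, h2'⟩ | ⟨h2, h2'⟩ <;>
      rcases hbc with ⟨h3, h3'⟩ | ⟨h3, h3'⟩
  · linarith [schur_aux a b c x y z hc h3 h1 hz h3' h1']
  · linarith [schur_aux a c b x z y hb h3 h2 hy h3' h2']
  · linarith [schur_aux c a b z x y hb h1 h2 hy h1' h2']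
  · linarith [schur_aux c a b z x y hb h1 h2 hy h1' h2']
  · linarith [schur_aux b a c y x z hc h2 h1 hz h2' h1']
  · linarith [schur_aux b a c y x z hc h2 h1 hz h2' h1']
  · linarith [schur_aux b c a y z x ha h2 h3 hx h2' h3']
  · linarith [schur_aux c b a z y x ha h1 h3 hx h1' h3']

lemma triple_key {d : ℕ} (f : Fin d → Fin d → Fin d → ℝ)
    (key : ∀ i j k, 0 ≤ f i j k + f j k i + f k i j) :
    0 ≤ ∑ i, ∑ j, ∑ k, f i j k := by
  have rot1 : ∑ i, ∑ j, ∑ k, f j k i = ∑ i, ∑ j, ∑ k, f i j k := by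
    rw [Finset.sum_comm]
    exact Finset.sum_congr rfl fun j _ => Finset.sum_comm
  have rot2 : ∑ i, ∑ j, ∑ k, f k i j = ∑ i, ∑ j, ∑ k, f i j k := by
    rw [Finset.sum_comm]
    refine Eq.trans (Finset.sum_congr rfl fun j _ => Finset.sum_comm) ?_
    rw [Finset.sum_comm]
    exact Finset.sum_congr rfl fun k _ => Finset.sum_comm
  have hsum : 0 ≤ ∑ i, ∑ j, ∑ k, (f i j k + f j k i + f k i j) :=
    Finset.sum_nonneg fun i _ => Finset.sum_nonneg fun j _ =>
      Finset.sum_nonneg fun k _ => key i j k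
  have hsplit : ∑ i, ∑ j, ∑ k, (f i j k + f j k i + f k i j)
      = (∑ i, ∑ j, ∑ k, f i j k) + (∑ i, ∑ j, ∑ k, f j k i)
        + (∑ i, ∑ j, ∑ k, f k i j) := by
    simp [Finset.sum_add_distrib]
  rw [hsplit, rot1, rot2] at hsum
  linarith

/-- For a `d`-dimensional Hamiltonian with nondecreasing energies and thermal
probabilities `p i β = exp (-β * E i) / Z β`, the purity `∑ i, p i β ^ 2`
is nondecreasing in `β`: for `0 ≤ β' ≤ β` we have
`∑ i, p i β' ^ 2 ≤ ∑ i, p i β ^ 2`. -/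
theorem stmt3 (d : ℕ) (hd : 1 ≤ d) (E : Fin d → ℝ) (hE : Monotone E)
    (β' β : ℝ) (hβ' : 0 ≤ β') (hββ' : β' ≤ β) :
    ∑ i, (Real.exp (-β' * E i) / ∑ j, Real.exp (-β' * E j)) ^ 2
      ≤ ∑ i, (Real.exp (-β * E i) / ∑ j, Real.exp (-β * E j)) ^ 2 := by
  haveI : Nonempty (Fin d) := ⟨⟨0, hd⟩⟩
  set t : Fin d → ℝ := fun i => Real.exp (-β' * E i) with ht
  set s : Fin d → ℝ := fun i => Real.exp (-(β - β') * E i) with hs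
  have htpos : ∀ i, 0 < t i := fun i => Real.exp_pos _
  have hspos : ∀ i, 0 < s i := fun i => Real.exp_pos _
  have hβe : ∀ i, Real.exp (-β * E i) = t i * s i := by
    intro i
    rw [ht, hs]
    simp only
    rw [← Real.exp_add]
    ring_nf
  have hanti : ∀ i j : Fin d, E i ≤ E j → t j ≤ t i ∧ s j ≤ s i := by
    intro i j hij
    constructor <;> apply Real.exp_le_exp.2 <;> nlinarith
  have Z'pos : 0 < ∑ j, t j :=
    Finset.sum_pos (fun i _ => htpos i) Finset.univ_nonempty
  have Zpos : 0 < ∑ j, t j * s j :=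
    Finset.sum_pos (fun i _ => mul_pos (htpos i) (hspos i)) Finset.univ_nonempty
  simp only [hβe]
  have lhs_eq : ∑ i, (t i / ∑ j, t j) ^ 2 = (∑ i, t i ^ 2) / (∑ j, t j) ^ 2 := by
    rw [Finset.sum_div]
    exact Finset.sum_congr rfl fun i _ => div_pow _ _ _
  have rhs_eq : ∑ i, (t i * s i / ∑ j, t j * s j) ^ 2
      = (∑ i, (t i * s i) ^ 2) / (∑ j, t j * s j) ^ 2 := by
    rw [Finset.sum_div]
    exact Finset.sum_congr rfl fun i _ => div_pow _ _ _
  rw [lhs_eq, rhs_eq, div_le_div_iff₀ (by positivity) (by positivity)]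
  have expandL : (∑ i, t i ^ 2) * (∑ j, t j * s j) ^ 2
      = ∑ i, ∑ j, ∑ k, t i ^ 2 * (t j * s j) * (t k * s k) := by
    rw [sq, Finset.sum_mul_sum, Finset.sum_mul]
    refine Finset.sum_congr rfl fun i _ => ?_
    rw [Finset.mul_sum]
    refine Finset.sum_congr rfl fun j _ => ?_
    rw [Finset.mul_sum]
    exact Finset.sum_congr rfl fun k _ => by ring
  have expandR : (∑ i, (t i * s i) ^ 2) * (∑ j, t j) ^ 2
      = ∑ i, ∑ j, ∑ k, (t i * s i) ^ 2 * t j * t k := by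
    rw [sq, Finset.sum_mul_sum, Finset.sum_mul]
    refine Finset.sum_congr rfl fun i _ => ?_
    rw [Finset.mul_sum]
    refine Finset.sum_congr rfl fun j _ => ?_
    rw [Finset.mul_sum]
    exact Finset.sum_congr rfl fun k _ => by ring
  rw [expandL, expandR, ← sub_nonneg, ← Finset.sum_sub_distrib]
  have hdiff : ∀ i : Fin d, (∑ j, ∑ k, (t i * s i)^2 * t j * t k)
      - (∑ j, ∑ k, t i ^ 2 * (t j * s j) * (t k * s k))
      = ∑ j, ∑ k, (t i ^ 2 * t j * t k * (s i ^ 2 - s j * s k)) := by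
    intro i
    rw [← Finset.sum_sub_distrib]
    refine Finset.sum_congr rfl fun j _ => ?_
    rw [← Finset.sum_sub_distrib]
    exact Finset.sum_congr rfl fun k _ => by ring
  simp only [hdiff]
  refine triple_key _ ?_
  intro i j k
  have heq : t i ^ 2 * t j * t k * (s i ^ 2 - s j * s k)
      + t j ^ 2 * t k * t i * (s j ^ 2 - s k * s i)
      + t k ^ 2 * t i * t j * (s k ^ 2 - s i * s j)
      = t i * t j * t k *
        (t i * (s i ^ 2 - s j * s k) + t j * (s j ^ 2 - s k * s i)
          + t k * (s k ^ 2 - s i * s j)) := by ring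
  rw [heq]
  refine mul_nonneg (le_of_lt (by positivity)) ?_
  refine schur_sym (t i) (t j) (t k) (s i) (s j) (s k)
    (htpos i).le (htpos j).le (htpos k).le
    (hspos i).le (hspos j).le (hspos k).le ?_ ?_ ?_
  · rcases le_total (E i) (E j) with h | h
    · exact Or.inl ⟨(hanti i j h).1, (hanti i j h).2⟩
    · exact Or.inr ⟨(hanti j i h).1, (hanti j i h).2⟩
  · rcases le_total (E i) (E k) with h | h
    · exact Or.inl ⟨(hanti i k h).1, (hanti i k h).2⟩
    · exact Or.inr ⟨(hanti k i h).1, (hanti k i h).2⟩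
  · rcases le_total (E j) (E k) with h | h
    · exact Or.inl ⟨(hanti j k h).1, (hanti j k h).2⟩
    · exact Or.inr ⟨(hanti k j h).1, (hanti k j h).2⟩
end

section
/- For any finite sequence of real numbers A_0, ..., A_{d-1} and inverse temperatures 0 ≤ β' ≤ β, the Gibbs distribution at β with energies A_j majorises the Gibbs distribution at β': that is, the vector with components e^{-β A_j}/Σ_k e^{-β A_k} majorises the vector with components e^{-β' A_j}/Σ_k e^{-β' A_k}. -/
open Real

/-- `u` majorises `w`: for every set of indices, the corresponding partial sum of `w`
is dominated by some partial sum of `u` over equally many indices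
(equivalently, all partial sums of the decreasing rearrangements are ordered),
and the total sums agree. -/
def Majorizes {d : ℕ} (u w : Fin d → ℝ) : Prop :=
  (∀ s : Finset (Fin d), ∃ t : Finset (Fin d), t.card = s.card ∧
      ∑ i ∈ s, w i ≤ ∑ i ∈ t, u i) ∧
  ∑ i, u i = ∑ i, w i

lemma exists_bottom {d : ℕ} (A : Fin d → ℝ) : ∀ m, m ≤ d → ∃ t : Finset (Fin d),
    t.card = m ∧ ∀ i ∈ t, ∀ j ∉ t, A i ≤ A j := by
  intro m
  induction m with
  | zero => exact fun _ => ⟨∅, rfl, by simp⟩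
  | succ n ih =>
    intro h
    obtain ⟨t, hc, hp⟩ := ih (Nat.le_of_succ_le h)
    have hne : tᶜ.Nonempty := by
      apply Finset.card_pos.mp
      rw [Finset.card_compl, hc, Fintype.card_fin]
      omega
    obtain ⟨j₀, hj₀, hmin⟩ := Finset.exists_min_image tᶜ A hne
    have hj₀t : j₀ ∉ t := Finset.mem_compl.mp hj₀
    refine ⟨insert j₀ t, ?_, ?_⟩
    · rw [Finset.card_insert_of_notMem hj₀t, hc]
    · intro i hi j hj
      rcases Finset.mem_insert.mp hi with rfl | hi
      · exact hmin j (Finset.mem_compl.mpr fun hjt => hj (Finset.mem_insert_of_mem hjt))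
      · exact hp i hi j fun hjt => hj (Finset.mem_insert_of_mem hjt)

lemma sum_le_sum_top {d : ℕ} (w : Fin d → ℝ) (s t : Finset (Fin d))
    (hcard : s.card = t.card) (ht : ∀ i ∈ t, ∀ j ∉ t, w j ≤ w i) :
    ∑ i ∈ s, w i ≤ ∑ i ∈ t, w i := by
  have hsd : (s \ t).card = (t \ s).card := by
    have h1 := Finset.card_inter_add_card_sdiff s t
    have h2 := Finset.card_inter_add_card_sdiff t s
    rw [Finset.inter_comm] at h2
    omega
  have e := Finset.equivOfCardEq hsd
  have hdiff : ∑ i ∈ s \ t, w i ≤ ∑ i ∈ t \ s, w i := by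
    calc ∑ i ∈ s \ t, w i = ∑ i ∈ (s \ t).attach, w i.1 := (Finset.sum_attach _ _).symm
      _ ≤ ∑ i ∈ (s \ t).attach, w (e i).1 := by
          apply Finset.sum_le_sum
          intro i _
          exact ht (e i).1 (Finset.mem_sdiff.mp (e i).2).1 i.1
            (Finset.mem_sdiff.mp i.2).2
      _ = ∑ j ∈ (t \ s).attach, w j.1 := by
          rw [← Finset.univ_eq_attach, ← Finset.univ_eq_attach]
          exact Equiv.sum_comp e (fun j => w j.1)
      _ = ∑ i ∈ t \ s, w i := Finset.sum_attach _ _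
  have h1 : ∑ i ∈ s \ (s ∩ t), w i + ∑ i ∈ s ∩ t, w i = ∑ i ∈ s, w i :=
    Finset.sum_sdiff Finset.inter_subset_left
  have h2 : ∑ i ∈ t \ (t ∩ s), w i + ∑ i ∈ t ∩ s, w i = ∑ i ∈ t, w i :=
    Finset.sum_sdiff Finset.inter_subset_left
  rw [Finset.sdiff_inter_self_left] at h1 h2
  rw [Finset.inter_comm t s] at h2
  linarith

lemma key_cross {d : ℕ} (A : Fin d → ℝ) (β' β : ℝ) (hββ' : β' ≤ β)
    (t : Finset (Fin d)) (ht : ∀ i ∈ t, ∀ j ∉ t, A i ≤ A j) :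
    (∑ i ∈ t, exp (-β' * A i)) * (∑ k, exp (-β * A k)) ≤
    (∑ i ∈ t, exp (-β * A i)) * (∑ k, exp (-β' * A k)) := by
  rw [← Finset.sum_add_sum_compl t (fun k => exp (-β * A k)),
      ← Finset.sum_add_sum_compl t (fun k => exp (-β' * A k)),
      mul_add, mul_add]
  have hcomm : (∑ i ∈ t, exp (-β' * A i)) * (∑ i ∈ t, exp (-β * A i)) =
      (∑ i ∈ t, exp (-β * A i)) * (∑ i ∈ t, exp (-β' * A i)) := mul_comm _ _
  have hcross : (∑ i ∈ t, exp (-β' * A i)) * (∑ j ∈ tᶜ, exp (-β * A j)) ≤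
      (∑ i ∈ t, exp (-β * A i)) * (∑ j ∈ tᶜ, exp (-β' * A j)) := by
    rw [Finset.sum_mul_sum, Finset.sum_mul_sum]
    apply Finset.sum_le_sum
    intro i hi
    apply Finset.sum_le_sum
    intro j hj
    rw [← Real.exp_add, ← Real.exp_add]
    apply Real.exp_le_exp.mpr
    have hA : A i ≤ A j := ht i hi j (Finset.mem_compl.mp hj)
    nlinarith [mul_le_mul_of_nonneg_left hA (sub_nonneg.mpr hββ')]
  linarith

/-- For any finite list of energies `A` and inverse temperatures `0 ≤ β' ≤ β`,
the Gibbs distribution at `β` majorises the Gibbs distribution at `β'`. -/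
theorem stmt4 (d : ℕ) (hd : 0 < d) (A : Fin d → ℝ) (β' β : ℝ)
    (hβ' : 0 ≤ β') (hββ' : β' ≤ β) :
    Majorizes (fun j => Real.exp (-β * A j) / ∑ k, Real.exp (-β * A k))
      (fun j => Real.exp (-β' * A j) / ∑ k, Real.exp (-β' * A k)) := by
  have hne : (⟨0, hd⟩ : Fin d) ∈ Finset.univ := Finset.mem_univ _
  have hS : 0 < ∑ k, exp (-β * A k) :=
    Finset.sum_pos (fun i _ => exp_pos _) ⟨_, hne⟩
  have hS' : 0 < ∑ k, exp (-β' * A k) :=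
    Finset.sum_pos (fun i _ => exp_pos _) ⟨_, hne⟩
  constructor
  · intro s
    have hm : s.card ≤ d := by
      simpa [Fintype.card_fin] using Finset.card_le_univ s
    obtain ⟨t, hct, hp⟩ := exists_bottom A s.card hm
    refine ⟨t, hct, ?_⟩
    simp only
    rw [← Finset.sum_div, ← Finset.sum_div]
    have step1 : ∑ i ∈ s, exp (-β' * A i) ≤ ∑ i ∈ t, exp (-β' * A i) := by
      apply sum_le_sum_top _ s t hct.symm
      intro i hi j hj
      apply Real.exp_le_exp.mpr
      have := hp i hi j hj
      nlinarith
    have step2 : (∑ i ∈ t, exp (-β' * A i)) / (∑ k, exp (-β' * A k)) ≤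
        (∑ i ∈ t, exp (-β * A i)) / (∑ k, exp (-β * A k)) := by
      rw [div_le_div_iff₀ hS' hS]
      exact key_cross A β' β hββ' t hp
    calc (∑ i ∈ s, exp (-β' * A i)) / (∑ k, exp (-β' * A k))
        ≤ (∑ i ∈ t, exp (-β' * A i)) / (∑ k, exp (-β' * A k)) := by
          exact div_le_div_of_nonneg_right step1 hS'.le
      _ ≤ _ := step2
  · simp only
    rw [← Finset.sum_div, ← Finset.sum_div, div_self hS.ne', div_self hS'.ne']
end

section
/- For d = 3 with energies 0 = E_0 ≤ E_1 ≤ E_2 and thermal probabilities p_i = e^{-β E_i}/Z, the inequality e^{-βE_1} + 2e^{-β(E_1+E_2)} + e^{-βE_2} ≥ (e^{-βE_1} + e^{-βE_2})(e^{-2βE_1} + e^{-2βE_2}) holds for all β ≥ 0. -/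
open Real

/-- For `β ≥ 0` and `0 ≤ E₁ ≤ E₂`:
`e^{-βE₁} + 2 e^{-β(E₁+E₂)} + e^{-βE₂} ≥ (e^{-βE₁} + e^{-βE₂})(e^{-2βE₁} + e^{-2βE₂})`. -/
theorem stmt5 (β E₁ E₂ : ℝ) (hβ : 0 ≤ β) (h1 : 0 ≤ E₁) (h12 : E₁ ≤ E₂) :
    (Real.exp (-β * E₁) + Real.exp (-β * E₂)) *
        (Real.exp (-2 * β * E₁) + Real.exp (-2 * β * E₂))
      ≤ Real.exp (-β * E₁) + 2 * Real.exp (-β * (E₁ + E₂)) + Real.exp (-β * E₂) := by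
  set a := Real.exp (-β * E₁) with ha
  set b := Real.exp (-β * E₂) with hb
  have ha1 : a ≤ 1 := by
    rw [ha]; apply Real.exp_le_one_iff.2; nlinarith
  have hb1 : b ≤ 1 := by
    rw [hb]; apply Real.exp_le_one_iff.2; nlinarith
  have hbpos : 0 < b := Real.exp_pos _
  have hapos : 0 < a := Real.exp_pos _
  have h2a : Real.exp (-2 * β * E₁) = a * a := by
    rw [ha, ← Real.exp_add]; ring_nf
  have h2b : Real.exp (-2 * β * E₂) = b * b := by
    rw [hb, ← Real.exp_add]; ring_nf
  have hab : Real.exp (-β * (E₁ + E₂)) = a * b := by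
    rw [ha, hb, ← Real.exp_add]; ring_nf
  rw [h2a, h2b, hab]
  nlinarith [mul_pos hapos hbpos, sq_nonneg (a - b), mul_nonneg hapos.le hbpos.le]
end

section
/- For d = 3 with energies 0 ≤ E_1 ≤ E_2, the function β ↦ (e^{-βE_2} + e^{-β(E_1+E_2)}) / (2(e^{-βE_1} + e^{-β(E_1+E_2)} + e^{-βE_2})) is nonincreasing on [0,∞). -/
open Real

/-- For `0 ≤ E₁ ≤ E₂`, the function
`β ↦ (e^{-βE₂} + e^{-β(E₁+E₂)}) / (2(e^{-βE₁} + e^{-β(E₁+E₂)} + e^{-βE₂}))`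
is nonincreasing on `[0,∞)`. -/
theorem stmt8 (E₁ E₂ : ℝ) (h1 : 0 ≤ E₁) (h12 : E₁ ≤ E₂) :
    AntitoneOn
      (fun β : ℝ => (Real.exp (-β * E₂) + Real.exp (-β * (E₁ + E₂))) /
        (2 * (Real.exp (-β * E₁) + Real.exp (-β * (E₁ + E₂)) + Real.exp (-β * E₂))))
      (Set.Ici 0) := by
  intro x hx y hy hxy
  simp only [Set.mem_Ici] at hx hy
  have key1 : Real.exp (-y * E₂) * Real.exp (-x * E₁) ≤
      Real.exp (-x * E₂) * Real.exp (-y * E₁) := by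
    rw [← Real.exp_add, ← Real.exp_add, Real.exp_le_exp]
    nlinarith [mul_le_mul_of_nonneg_left h12 (sub_nonneg.mpr hxy)]
  have key2 : Real.exp (-y * (E₁ + E₂)) * Real.exp (-x * E₁) ≤
      Real.exp (-x * (E₁ + E₂)) * Real.exp (-y * E₁) := by
    rw [← Real.exp_add, ← Real.exp_add, Real.exp_le_exp]
    nlinarith [mul_le_mul_of_nonneg_left (le_trans h1 h12) (sub_nonneg.mpr hxy)]
  have dx : 0 < 2 * (Real.exp (-x * E₁) + Real.exp (-x * (E₁ + E₂)) + Real.exp (-x * E₂)) := by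
    positivity
  have dy : 0 < 2 * (Real.exp (-y * E₁) + Real.exp (-y * (E₁ + E₂)) + Real.exp (-y * E₂)) := by
    positivity
  simp only
  rw [div_le_div_iff₀ dy dx]
  nlinarith [key1, key2, Real.exp_pos (-x * E₂), Real.exp_pos (-y * E₂),
    Real.exp_pos (-x * (E₁ + E₂)), Real.exp_pos (-y * (E₁ + E₂))]
end

section
/- For a 4-level system with energies 0 = E_0 ≤ E_1 ≤ E_2 ≤ E_3 satisfying decreasing gaps E_1 - E_0 ≥ E_2 - E_1 ≥ E_3 - E_2, the quantity ‖r_2(β)‖ = p_0p_2 + p_1p_3 + p_2p_0 + p_3p_1 = 2(p_0p_2 + p_1p_3) with p_i = e^{-βE_i}/Z(β) is nonincreasing in β. -/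
open Real

/-- Thermal probability for a 4-level system with energies `0, E₁, E₂, E₃` at inverse
temperature `b`: `p4 E₁ E₂ E₃ b e = e^{-b e} / Z(b)`. -/
noncomputable def p4 (E₁ E₂ E₃ b e : ℝ) : ℝ :=
  Real.exp (-b * e) /
    (Real.exp (-b * 0) + Real.exp (-b * E₁) + Real.exp (-b * E₂) + Real.exp (-b * E₃))

/-- The partition function `Z(β)` (with `E₀ = 0`). -/
noncomputable def Z4 (E₁ E₂ E₃ β : ℝ) : ℝ :=
  1 + exp (-(β*E₁)) + exp (-(β*E₂)) + exp (-(β*E₃))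

/-- Numerator `e^{-βE₂} + e^{-βE₁}e^{-βE₃}`. -/
noncomputable def N4 (E₁ E₂ E₃ β : ℝ) : ℝ :=
  exp (-(β*E₂)) + exp (-(β*E₁)) * exp (-(β*E₃))

/-- `F4 β = 2 N(β) / Z(β)²`. -/
noncomputable def F4 (E₁ E₂ E₃ β : ℝ) : ℝ :=
  2 * N4 E₁ E₂ E₃ β / (Z4 E₁ E₂ E₃ β)^2

lemma Z4pos (E₁ E₂ E₃ β : ℝ) : 0 < Z4 E₁ E₂ E₃ β := by unfold Z4; positivity

lemma hexp (E β : ℝ) : HasDerivAt (fun b => Real.exp (-(b*E))) (-E * Real.exp (-(β*E))) β := by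
  have h := (((hasDerivAt_id β).mul_const E).neg).exp
  simpa [mul_comm] using h

lemma hZ4 (E₁ E₂ E₃ β : ℝ) :
    HasDerivAt (Z4 E₁ E₂ E₃)
      (-E₁ * exp (-(β*E₁)) + -E₂ * exp (-(β*E₂)) + -E₃ * exp (-(β*E₃))) β := by
  have h := (((hasDerivAt_const β (1:ℝ)).add (hexp E₁ β)).add (hexp E₂ β)).add (hexp E₃ β)
  refine (h.congr_of_eventuallyEq (Filter.Eventually.of_forall fun x => ?_)).congr_deriv (by ring)
  simp [Z4]

lemma hN4 (E₁ E₂ E₃ β : ℝ) :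
    HasDerivAt (N4 E₁ E₂ E₃)
      (-E₂ * exp (-(β*E₂)) + (-E₁ * exp (-(β*E₁)) * exp (-(β*E₃))
        + exp (-(β*E₁)) * (-E₃ * exp (-(β*E₃))))) β := by
  exact (hexp E₂ β).add ((hexp E₁ β).mul (hexp E₃ β))

lemma hF4 (E₁ E₂ E₃ β : ℝ) :
    HasDerivAt (F4 E₁ E₂ E₃)
      ((2 * (-E₂ * exp (-(β*E₂)) + (-E₁ * exp (-(β*E₁)) * exp (-(β*E₃))
          + exp (-(β*E₁)) * (-E₃ * exp (-(β*E₃))))) * (Z4 E₁ E₂ E₃ β)^2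
        - 2 * N4 E₁ E₂ E₃ β * (2 * Z4 E₁ E₂ E₃ β ^ 1 *
            (-E₁ * exp (-(β*E₁)) + -E₂ * exp (-(β*E₂)) + -E₃ * exp (-(β*E₃)))))
        / ((Z4 E₁ E₂ E₃ β)^2)^2) β := by
  exact ((hN4 E₁ E₂ E₃ β).const_mul 2).div ((hZ4 E₁ E₂ E₃ β).pow 2)
    (pow_ne_zero 2 (Z4pos E₁ E₂ E₃ β).ne')

lemma F4cont (E₁ E₂ E₃ : ℝ) : Continuous (F4 E₁ E₂ E₃) := by
  apply Continuous.div
  · unfold N4; fun_prop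
  · unfold Z4; fun_prop
  · exact fun x => pow_ne_zero 2 (Z4pos E₁ E₂ E₃ x).ne'

lemma S1le (a b c : ℝ) (hc : 0 ≤ c) (hcb : c ≤ b) (hba : b ≤ a) (ha1 : a ≤ 1)
    (hlc2 : b*b ≤ a*c) :
    -b + b*c + b*b - 2*(a*c) + a*b ≤ 0 := by
  nlinarith [mul_nonneg (hc.trans hcb) (sub_nonneg.2 ha1), mul_nonneg hc (sub_nonneg.2 hba)]

lemma S12le (a b c : ℝ) (hc : 0 ≤ c) (hcb : c ≤ b) (hba : b ≤ a) (ha1 : a ≤ 1)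
    (hlc2 : b*b ≤ a*c) :
    -2*b + 2*(b*c) + 2*(b*b) - 3*(a*c) + a*c*c + a*b*c - a*a*c ≤ 0 := by
  have hac : 0 ≤ a*c := mul_nonneg ((hc.trans hcb).trans hba) hc
  have hc1 : c ≤ 1 := (hcb.trans hba).trans ha1
  nlinarith [mul_nonneg (hc.trans hcb) (sub_nonneg.2 hc1), mul_nonneg hac (sub_nonneg.2 hc1),
    mul_nonneg hac (sub_nonneg.2 hba)]

lemma S123le (a b c : ℝ) (hc : 0 ≤ c) (hcb : c ≤ b) (hba : b ≤ a) (ha1 : a ≤ 1)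
    (hlc2 : b*b ≤ a*c) :
    -2*b + 4*(b*c) + 2*(b*b) - 4*(a*c) + 2*(a*c*c) - 2*(a*a*c) ≤ 0 := by
  have hac : 0 ≤ a*c := mul_nonneg ((hc.trans hcb).trans hba) hc
  have hc1 : c ≤ 1 := (hcb.trans hba).trans ha1
  nlinarith [mul_nonneg (hc.trans hcb) (sub_nonneg.2 hc1), mul_nonneg hc (sub_nonneg.2 hba),
    mul_nonneg hac (sub_nonneg.2 ((hcb.trans hba) : c ≤ a))]

lemma keyD (a b c E₁ E₂ E₃ : ℝ) (hc : 0 ≤ c) (hcb : c ≤ b) (hba : b ≤ a) (ha1 : a ≤ 1)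
    (hlc2 : b*b ≤ a*c)
    (hg3 : 0 ≤ E₃ - E₂) (hg2 : E₃ - E₂ ≤ E₂ - E₁) (hg1 : E₂ - E₁ ≤ E₁) :
    (-(E₂*b) - (E₁+E₃)*(a*c)) * (1+a+b+c)
      - 2*(b+a*c)*(-(E₁*a+E₂*b+E₃*c)) ≤ 0 := by
  have h1 := S1le a b c hc hcb hba ha1 hlc2
  have h2 := S12le a b c hc hcb hba ha1 hlc2
  have h3 := S123le a b c hc hcb hba ha1 hlc2
  nlinarith [mul_nonneg (by linarith : (0:ℝ) ≤ E₁ - (E₂-E₁))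
      (by linarith : (0:ℝ) ≤ -(-b + b*c + b*b - 2*(a*c) + a*b)),
    mul_nonneg (by linarith : (0:ℝ) ≤ (E₂-E₁) - (E₃-E₂))
      (by linarith : (0:ℝ) ≤ -(-2*b + 2*(b*c) + 2*(b*b) - 3*(a*c) + a*c*c + a*b*c - a*a*c)),
    mul_nonneg hg3
      (by linarith : (0:ℝ) ≤ -(-2*b + 4*(b*c) + 2*(b*b) - 4*(a*c) + 2*(a*c*c) - 2*(a*a*c)))]

lemma F4anti (E₁ E₂ E₃ : ℝ) (h1 : 0 ≤ E₁) (h2 : E₁ ≤ E₂) (h3 : E₂ ≤ E₃)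
    (hgap1 : E₂ - E₁ ≤ E₁ - 0) (hgap2 : E₃ - E₂ ≤ E₂ - E₁) :
    AntitoneOn (F4 E₁ E₂ E₃) (Set.Ici 0) := by
  apply antitoneOn_of_hasDerivWithinAt_nonpos (convex_Ici 0)
    (F4cont E₁ E₂ E₃).continuousOn
    (fun x _ => (hF4 E₁ E₂ E₃ x).hasDerivWithinAt)
  intro x hx
  rw [interior_Ici] at hx
  have hx0 : (0:ℝ) ≤ x := le_of_lt hx
  set a := exp (-(x*E₁)) with ha
  set b := exp (-(x*E₂)) with hb
  set c := exp (-(x*E₃)) with hc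
  have hcpos : 0 < c := exp_pos _
  have hcb : c ≤ b := exp_le_exp.mpr (by nlinarith [mul_nonneg hx0 (sub_nonneg.2 h3)])
  have hba : b ≤ a := exp_le_exp.mpr (by nlinarith [mul_nonneg hx0 (sub_nonneg.2 h2)])
  have ha1 : a ≤ 1 := by
    rw [ha, ← Real.exp_zero]
    exact exp_le_exp.mpr (by nlinarith [mul_nonneg hx0 h1])
  have hlc2 : b*b ≤ a*c := by
    rw [ha, hb, hc, ← Real.exp_add, ← Real.exp_add]
    exact exp_le_exp.mpr (by nlinarith [mul_nonneg hx0 (by linarith : 0 ≤ 2*E₂ - E₁ - E₃)])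
  have hkey := keyD a b c E₁ E₂ E₃ hcpos.le hcb hba ha1 hlc2
    (by linarith) hgap2 (by linarith)
  apply div_nonpos_of_nonpos_of_nonneg _ (by positivity)
  have hZ : Z4 E₁ E₂ E₃ x = 1 + a + b + c := rfl
  have hN : N4 E₁ E₂ E₃ x = b + a * c := rfl
  rw [hZ, hN]
  nlinarith [mul_nonneg (by positivity : (0:ℝ) ≤ 1 + a + b + c)
    (neg_nonneg.2 hkey)]

lemma F4eq (E₁ E₂ E₃ b : ℝ) :
    2 * (p4 E₁ E₂ E₃ b 0 * p4 E₁ E₂ E₃ b E₂ + p4 E₁ E₂ E₃ b E₁ * p4 E₁ E₂ E₃ b E₃)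
      = F4 E₁ E₂ E₃ b := by
  unfold p4 F4 N4 Z4
  simp only [neg_mul, mul_zero, neg_zero, Real.exp_zero]
  have hz : (0:ℝ) < 1 + exp (-(b*E₁)) + exp (-(b*E₂)) + exp (-(b*E₃)) := by positivity
  field_simp

/-- For a 4-level system with energies `0 = E₀ ≤ E₁ ≤ E₂ ≤ E₃` satisfying decreasing
gaps `E₁ - 0 ≥ E₂ - E₁ ≥ E₃ - E₂`, the quantity `‖r₂(β)‖ = 2(p₀p₂ + p₁p₃)` is
nonincreasing in `β`. -/
theorem stmt10 (E₁ E₂ E₃ β' β : ℝ) (h1 : 0 ≤ E₁) (h2 : E₁ ≤ E₂) (h3 : E₂ ≤ E₃)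
    (hgap1 : E₂ - E₁ ≤ E₁ - 0) (hgap2 : E₃ - E₂ ≤ E₂ - E₁)
    (hβ' : 0 ≤ β') (hββ' : β' ≤ β) :
    2 * (p4 E₁ E₂ E₃ β 0 * p4 E₁ E₂ E₃ β E₂ + p4 E₁ E₂ E₃ β E₁ * p4 E₁ E₂ E₃ β E₃)
      ≤ 2 * (p4 E₁ E₂ E₃ β' 0 * p4 E₁ E₂ E₃ β' E₂ + p4 E₁ E₂ E₃ β' E₁ * p4 E₁ E₂ E₃ β' E₃) := by
  rw [F4eq, F4eq]
  exact F4anti E₁ E₂ E₃ h1 h2 h3 hgap1 hgap2 hβ' (hβ'.trans hββ') hββ'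
end

section
/- For a 4-level thermal state with energies 0 = E_0 ≤ E_1 ≤ E_2 ≤ E_3 and probabilities p_i = e^{-βE_i}/Z, the inequality p_0/(p_0²+p_1²+p_2²+p_3²) ≥ p_2/(2(p_0p_2 + p_1p_3)) holds whenever the gaps are decreasing (E_1 ≥ E_2 - E_1 ≥ E_3 - E_2). -/
open Real

lemma key_ineq (a b c : ℝ) (hc : 0 < c) (hcb : c ≤ b) (hba : b ≤ a) (ha1 : a ≤ 1)
    (hac : b ^ 2 ≤ a * c) :
    b * (1 + a ^ 2 + b ^ 2 + c ^ 2) ≤ 2 * (b + a * c) := by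
  nlinarith [mul_nonneg (mul_nonneg hc.le hc.le) (sub_nonneg.2 hba),
    mul_nonneg hc.le (sub_nonneg.2 hcb), mul_nonneg hc.le (sub_nonneg.2 ha1),
    mul_le_mul_of_nonneg_left hac (le_trans hc.le hcb),
    mul_nonneg (sub_nonneg.2 hac) (sub_nonneg.2 (le_trans hba ha1 : b ≤ 1)),
    mul_nonneg (mul_nonneg hc.le hc.le) hc.le,
    mul_nonneg (sub_nonneg.2 ha1) (mul_nonneg hc.le (le_trans hc.le hcb))]

/-- For a 4-level thermal state with energies `0 = E₀ ≤ E₁ ≤ E₂ ≤ E₃` with decreasing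
gaps `E₁ ≥ E₂ - E₁ ≥ E₃ - E₂`, one has
`p₀/(p₀² + p₁² + p₂² + p₃²) ≥ p₂/(2(p₀p₂ + p₁p₃))`. -/
theorem stmt12 (E₁ E₂ E₃ β : ℝ) (h1 : 0 ≤ E₁) (h2 : E₁ ≤ E₂) (h3 : E₂ ≤ E₃)
    (hgap1 : E₂ - E₁ ≤ E₁) (hgap2 : E₃ - E₂ ≤ E₂ - E₁) (hβ : 0 ≤ β) :
    p4 E₁ E₂ E₃ β E₂ /
        (2 * (p4 E₁ E₂ E₃ β 0 * p4 E₁ E₂ E₃ β E₂ + p4 E₁ E₂ E₃ β E₁ * p4 E₁ E₂ E₃ β E₃))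
      ≤ p4 E₁ E₂ E₃ β 0 /
        (p4 E₁ E₂ E₃ β 0 ^ 2 + p4 E₁ E₂ E₃ β E₁ ^ 2 +
          p4 E₁ E₂ E₃ β E₂ ^ 2 + p4 E₁ E₂ E₃ β E₃ ^ 2) := by
  set a := Real.exp (-β * E₁) with ha
  set b := Real.exp (-β * E₂) with hb
  set c := Real.exp (-β * E₃) with hc
  have h0 : Real.exp (-β * 0) = 1 := by norm_num
  have hap : 0 < a := Real.exp_pos _
  have hbp : 0 < b := Real.exp_pos _
  have hcp : 0 < c := Real.exp_pos _
  have hcb : c ≤ b := Real.exp_le_exp.2 (by nlinarith)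
  have hba : b ≤ a := Real.exp_le_exp.2 (by nlinarith)
  have ha1 : a ≤ 1 := by
    rw [ha, show (1:ℝ) = Real.exp 0 by simp]
    exact Real.exp_le_exp.2 (by nlinarith)
  have hac : b ^ 2 ≤ a * c := by
    rw [hb, ha, hc, ← Real.exp_add, sq, ← Real.exp_add]
    exact Real.exp_le_exp.2 (by nlinarith)
  have hZ : 0 < Real.exp (-β * 0) + a + b + c := by rw [h0]; positivity
  set Z := Real.exp (-β * 0) + a + b + c with hZdef
  have key := key_ineq a b c hcp hcb hba ha1 hac
  unfold p4
  rw [← ha, ← hb, ← hc, ← hZdef, h0]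
  rw [div_le_div_iff₀ (by positivity) (by positivity)]
  have hZ1 : Z = 1 + a + b + c := by rw [hZdef, h0]
  field_simp
  nlinarith [sq_nonneg Z, hZ.le, mul_le_mul_of_nonneg_right key (mul_pos hZ (mul_pos hZ (mul_pos hZ hZ))).le]
end

section
/- For real energies E_i ≤ E_m ≤ E_{m+1} and β ≥ 0, the inequality (E_{m+1} − E_i)(e^{β(E_m − E_i)} − 1) ≤ (E_m − E_i)(e^{β(E_{m+1} − E_i)} − 1) holds. -/
open Real

lemma key15 (s t : ℝ) (hs : 0 ≤ s) (hst : s ≤ t) :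
    t * (Real.exp s - 1) ≤ s * (Real.exp t - 1) := by
  rcases eq_or_lt_of_le (hs.trans hst) with ht | ht
  · have hs0 : s = 0 := le_antisymm (hst.trans ht.ge) hs
    simp [hs0, ← ht]
  · have h := convexOn_exp.2 (Set.mem_univ (0:ℝ)) (Set.mem_univ t)
      (sub_nonneg.2 (div_le_one_of_le₀ hst ht.le))
      (div_nonneg hs ht.le) (by ring)
    have hst' : (1 - s/t) • (0:ℝ) + (s/t) • t = s := by
      rw [smul_eq_mul, smul_eq_mul, mul_zero, zero_add, div_mul_cancel₀ s ht.ne']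
    rw [hst'] at h
    simp only [smul_eq_mul, Real.exp_zero, mul_one] at h
    have := mul_le_mul_of_nonneg_left h ht.le
    have ht' : t * (s / t * Real.exp t) = s * Real.exp t := by
      field_simp
    have ht'' : t * (1 - s / t) = t - s := by field_simp
    nlinarith [ht', ht'', this]

/-- For real energies `Eᵢ ≤ Eₘ ≤ Eₘ₊₁` and `β ≥ 0`:
`(Eₘ₊₁ − Eᵢ)(e^{β(Eₘ − Eᵢ)} − 1) ≤ (Eₘ − Eᵢ)(e^{β(Eₘ₊₁ − Eᵢ)} − 1)`. -/
theorem stmt15 (Ei Em Em1 β : ℝ) (h1 : Ei ≤ Em) (h2 : Em ≤ Em1) (hβ : 0 ≤ β) :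
    (Em1 - Ei) * (Real.exp (β * (Em - Ei)) - 1)
      ≤ (Em - Ei) * (Real.exp (β * (Em1 - Ei)) - 1) := by
  rcases eq_or_lt_of_le hβ with hβ0 | hβ0
  · simp [← hβ0]
  · have h := key15 (β * (Em - Ei)) (β * (Em1 - Ei))
      (by nlinarith) (by nlinarith)
    nlinarith [h]
end

section
/- For d = 5 probabilities p_0 ≥ p_1 ≥ p_2 ≥ p_3 ≥ p_4 ≥ 0 summing to 1 with p_0 + p_1 ≤ 1/2, one has (p_0 − p_1)(1/2 − p_0 − p_1) ≤ p_4(p_0 − p_3) ≤ p_0 p_1 − p_2 p_3. -/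
/-- For `d = 5` probabilities `p₀ ≥ p₁ ≥ p₂ ≥ p₃ ≥ p₄ ≥ 0` summing to `1` with
`p₀ + p₁ ≤ 1/2`:
`(p₀ − p₁)(1/2 − p₀ − p₁) ≤ p₄(p₀ − p₃) ≤ p₀p₁ − p₂p₃`. -/
theorem stmt19 (p₀ p₁ p₂ p₃ p₄ : ℝ) (h01 : p₁ ≤ p₀) (h12 : p₂ ≤ p₁) (h23 : p₃ ≤ p₂)
    (h34 : p₄ ≤ p₃) (h4 : 0 ≤ p₄) (hsum : p₀ + p₁ + p₂ + p₃ + p₄ = 1)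
    (hhalf : p₀ + p₁ ≤ 1 / 2) :
    (p₀ - p₁) * (1 / 2 - p₀ - p₁) ≤ p₄ * (p₀ - p₃) ∧
    p₄ * (p₀ - p₃) ≤ p₀ * p₁ - p₂ * p₃ := by
  constructor
  · nlinarith [mul_nonneg h4 (sub_nonneg.2 h34), mul_nonneg (sub_nonneg.2 h01) (sub_nonneg.2 h23), mul_nonneg (sub_nonneg.2 h12) (sub_nonneg.2 h34)]
  · nlinarith [mul_nonneg (sub_nonneg.2 h01) (sub_nonneg.2 (h34.trans h23)), mul_nonneg (sub_nonneg.2 h12) (sub_nonneg.2 h34), mul_nonneg h4 (sub_nonneg.2 (h23.trans h12))]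
end
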